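/- arXiv:2507.23025 — 3 statements merged into one kernel-verified Lean document; each statement's English description precedes it below -/
import Mathlib

section
/- Let A⊙ = (a⊙_{ij}) and B⊙ = (b⊙_{ij}) be m×n matrices of nonnegative integers, indexed by i = 1,…,m and j = 1,…,n. There exists a finite simple directed graph G whose joint degree matrix equals A⊙ and whose degree correlation matrix equals B⊙ (i.e., every vertex of G has out-degree in {1,…,m} and in-degree in {1,…,n}, for each i,j exactly b⊙_{ij} vertices have out-degree i and in-degree j, and exactly a⊙_{ij} edges (v₁,v₂) satisfy d⁺(v₁)=i and d⁻(v₂)=j) if and only if for all i = 1,…,m and j = 1,…,n: (1) Σ_{j'} a⊙_{ij'} = i·Σ_{j'} b⊙_{ij'}; (2) Σ_{i'} a⊙_{i'j} = j·Σ_{i'} b⊙_{i'j}; and (3) a⊙_{ij} + b⊙_{ij} ≤ (Σ_{j'} b⊙_{ij'})·(Σ_{i'} b⊙_{i'j}). -/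
/-- A finite simple directed graph: a finite vertex set, and an edge set of
ordered pairs of vertices with no self-loops. -/
structure FinDigraph where
  verts : Finset ℕ
  edges : Finset (ℕ × ℕ)
  mem_verts : ∀ e ∈ edges, e.1 ∈ verts ∧ e.2 ∈ verts
  no_loops : ∀ e ∈ edges, e.1 ≠ e.2

/-- Out-degree of a vertex: the number of edges leaving it. -/
def FinDigraph.outDeg (G : FinDigraph) (v : ℕ) : ℕ :=
  (G.edges.filter (fun e => e.1 = v)).card

/-- In-degree of a vertex: the number of edges entering it. -/
def FinDigraph.inDeg (G : FinDigraph) (v : ℕ) : ℕ :=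
  (G.edges.filter (fun e => e.2 = v)).card

/-- Joint degree matrix entry `a i j`: the number of edges `(v₁, v₂)` with
`d⁺(v₁) = i` and `d⁻(v₂) = j`. -/
def FinDigraph.jdm (G : FinDigraph) (i j : ℕ) : ℕ :=
  (G.edges.filter (fun e => G.outDeg e.1 = i ∧ G.inDeg e.2 = j)).card

/-- Degree correlation matrix entry `b i j`: the number of vertices `v` with
`d⁺(v) = i` and `d⁻(v) = j`. -/
def FinDigraph.dcm (G : FinDigraph) (i j : ℕ) : ℕ :=
  (G.verts.filter (fun v => G.outDeg v = i ∧ G.inDeg v = j)).card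

namespace D2K

open Finset

/-- out-degree of `v` in edge set `E`. -/
def odeg (E : Finset (ℕ × ℕ)) (v : ℕ) : ℕ := (E.filter (fun e => e.1 = v)).card
/-- in-degree of `v` in edge set `E`. -/
def ideg (E : Finset (ℕ × ℕ)) (v : ℕ) : ℕ := (E.filter (fun e => e.2 = v)).card
/-- block count: edges whose tail has label `i` and head has label `j`. -/
def blk (f g : ℕ → ℕ) (E : Finset (ℕ × ℕ)) (i j : ℕ) : ℕ :=
  (E.filter (fun e => f e.1 = i ∧ g e.2 = j)).card

lemma card_filter_insert_erase {x y : ℕ × ℕ} {E : Finset (ℕ × ℕ)}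
    (p : ℕ × ℕ → Prop) [DecidablePred p] (hx : x ∉ E) (hy : y ∈ E) (hpq : p x ↔ p y) :
    ((insert x (E.erase y)).filter p).card = (E.filter p).card := by
  rw [filter_insert, filter_erase]
  by_cases hp : p x
  · rw [if_pos hp, card_insert_of_notMem (by
      intro h; exact hx (mem_of_mem_filter x (mem_of_mem_erase h))),
      card_erase_of_mem (mem_filter.2 ⟨hy, hpq.1 hp⟩)]
    have : (E.filter p).card ≠ 0 := by
      intro h; rw [card_eq_zero] at h
      have := mem_filter.2 ⟨hy, hpq.1 hp⟩; rw [h] at this; exact absurd this (notMem_empty _)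
    omega
  · rw [if_neg hp, erase_eq_of_notMem (by
      intro h; exact hp (hpq.2 (mem_filter.1 h).2))]

lemma sum_odeg (E : Finset (ℕ × ℕ)) (S : Finset ℕ) :
    ∑ v ∈ S, odeg E v = (E.filter (fun e => e.1 ∈ S)).card := by
  rw [card_eq_sum_card_fiberwise (f := Prod.fst) (s := E.filter (fun e => e.1 ∈ S)) (t := S)
    (fun e he => (mem_filter.1 he).2)]
  refine sum_congr rfl (fun v hv => ?_)
  rw [filter_filter]
  unfold odeg
  refine congrArg _ (filter_congr (fun e _ => ?_))
  constructor
  · intro h; exact ⟨by rw [h]; exact hv, h⟩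
  · intro h; exact h.2

lemma filter_row_eq_sum_blk {E : Finset (ℕ × ℕ)} {f g : ℕ → ℕ} {n : ℕ} {i : ℕ}
    (hg : ∀ e ∈ E, g e.2 ∈ Icc 1 n) :
    (E.filter (fun e => f e.1 = i)).card = ∑ j ∈ Icc 1 n, blk f g E i j := by
  rw [card_eq_sum_card_fiberwise (f := fun e => g e.2) (t := Icc 1 n)
    (fun e he => hg e (mem_of_mem_filter e he))]
  refine sum_congr rfl (fun j _ => ?_)
  rw [blk, filter_filter]

lemma card_eq_sum_filter_row {E : Finset (ℕ × ℕ)} {f : ℕ → ℕ} {m : ℕ}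
    (hf : ∀ e ∈ E, f e.1 ∈ Icc 1 m) :
    E.card = ∑ i ∈ Icc 1 m, (E.filter (fun e => f e.1 = i)).card :=
  card_eq_sum_card_fiberwise (f := fun e : ℕ × ℕ => f e.1) (t := Icc 1 m) (fun e he => hf e he)


section swapedit
variable {E : Finset (ℕ × ℕ)} {v v' w : ℕ}

lemma odeg_edit_self (hin : (v, w) ∈ E) (hout : (v', w) ∉ E) (hne : v' ≠ v) :
    odeg (insert (v', w) (E.erase (v, w))) v = odeg E v - 1 := by
  unfold odeg
  rw [filter_insert, if_neg (by simpa using hne), filter_erase,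
    card_erase_of_mem (s := E.filter (fun e => e.1 = v)) (mem_filter.2 ⟨hin, rfl⟩)]

lemma odeg_edit_other (hin : (v, w) ∈ E) (hout : (v', w) ∉ E) (hne : v' ≠ v) :
    odeg (insert (v', w) (E.erase (v, w))) v' = odeg E v' + 1 := by
  unfold odeg
  rw [filter_insert, if_pos rfl, filter_erase,
    erase_eq_of_notMem (by intro h; exact hne ((mem_filter.1 h).2.symm)),
    card_insert_of_notMem (by intro h; exact hout (mem_of_mem_filter _ h))]

lemma odeg_edit_ne (hin : (v, w) ∈ E) {u : ℕ} (hu : u ≠ v) (hu' : u ≠ v') :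
    odeg (insert (v', w) (E.erase (v, w))) u = odeg E u := by
  unfold odeg
  rw [filter_insert, if_neg (by simpa using fun h => absurd h.symm hu'), filter_erase,
    erase_eq_of_notMem (by intro h; exact hu ((mem_filter.1 h).2.symm))]

end swapedit

section transp
variable {E : Finset (ℕ × ℕ)} {f g : ℕ → ℕ}

lemma swap_swap_image (E : Finset (ℕ × ℕ)) : (E.image Prod.swap).image Prod.swap = E := by
  rw [image_image]
  simp [Function.comp_def]

lemma filter_swap_image (p : ℕ × ℕ → Prop) [DecidablePred p] (E : Finset (ℕ × ℕ)) :
    (E.image Prod.swap).filter p = (E.filter (fun e => p e.swap)).image Prod.swap := by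
  ext e
  simp only [mem_filter, mem_image]
  constructor
  · rintro ⟨⟨a, ha, rfl⟩, hp⟩
    exact ⟨a, ⟨ha, by simpa using hp⟩, rfl⟩
  · rintro ⟨a, ⟨ha, hp⟩, rfl⟩
    exact ⟨⟨a, ha, rfl⟩, by simpa using hp⟩

lemma odeg_swap (E : Finset (ℕ × ℕ)) (u : ℕ) : odeg (E.image Prod.swap) u = ideg E u := by
  unfold odeg ideg
  rw [filter_swap_image, card_image_of_injective _ Prod.swap_injective]
  rfl

lemma ideg_swap (E : Finset (ℕ × ℕ)) (u : ℕ) : ideg (E.image Prod.swap) u = odeg E u := by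
  unfold odeg ideg
  rw [filter_swap_image, card_image_of_injective _ Prod.swap_injective]
  rfl

lemma blk_swap (f g : ℕ → ℕ) (E : Finset (ℕ × ℕ)) (i j : ℕ) :
    blk g f (E.image Prod.swap) i j = blk f g E j i := by
  unfold blk
  rw [filter_swap_image, card_image_of_injective _ Prod.swap_injective]
  congr 1
  refine filter_congr (fun e _ => ?_)
  simp [and_comm]

lemma wf_swap {V : Finset ℕ} (hE : ∀ e ∈ E, (e.1 ∈ V ∧ e.2 ∈ V) ∧ e.1 ≠ e.2) :
    ∀ e ∈ E.image Prod.swap, (e.1 ∈ V ∧ e.2 ∈ V) ∧ e.1 ≠ e.2 := by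
  intro e he
  obtain ⟨a, ha, rfl⟩ := mem_image.1 he
  obtain ⟨⟨h1, h2⟩, h3⟩ := hE a ha
  exact ⟨⟨h2, h1⟩, fun h => h3 h.symm⟩

end transp

lemma fixOut (V : Finset ℕ) (f g : ℕ → ℕ) (m n : ℕ) (a : ℕ → ℕ → ℕ)
    (hV : ∀ v ∈ V, f v ∈ Icc 1 m ∧ g v ∈ Icc 1 n)
    (h1 : ∀ i ∈ Icc 1 m, ∑ j ∈ Icc 1 n, a i j = i * (V.filter (fun v => f v = i)).card) :
    ∀ (k : ℕ) (E : Finset (ℕ × ℕ)),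
      (∀ e ∈ E, (e.1 ∈ V ∧ e.2 ∈ V) ∧ e.1 ≠ e.2) →
      (∀ i ∈ Icc 1 m, ∀ j ∈ Icc 1 n, blk f g E i j = a i j) →
      (∑ v ∈ V, ((odeg E v - f v) + (f v - odeg E v)) ≤ k) →
      ∃ E', (∀ e ∈ E', (e.1 ∈ V ∧ e.2 ∈ V) ∧ e.1 ≠ e.2) ∧
        (∀ i ∈ Icc 1 m, ∀ j ∈ Icc 1 n, blk f g E' i j = a i j) ∧
        (∀ u : ℕ, ideg E' u = ideg E u) ∧
        (∀ v ∈ V, odeg E' v = f v) := by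
  intro k
  induction k with
  | zero =>
    intro E hE hb hk
    refine ⟨E, hE, hb, fun _ => rfl, fun v hv => ?_⟩
    have h0 := (Finset.sum_eq_zero_iff).1 (Nat.le_zero.1 hk) v hv
    omega
  | succ k ih =>
    intro E hE hb hk
    by_cases hdone : ∀ v ∈ V, odeg E v = f v
    · exact ⟨E, hE, hb, fun _ => rfl, hdone⟩
    push_neg at hdone
    obtain ⟨v₀, hv₀, hv₀ne⟩ := hdone
    have htails : ∀ e ∈ E, e.1 ∈ V := fun e he => (hE e he).1.1
    have hheads : ∀ e ∈ E, e.2 ∈ V := fun e he => (hE e he).1.2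
    have hheadIcc : ∀ e ∈ E, g e.2 ∈ Icc 1 n := fun e he => (hV _ (hheads e he)).2
    have hsum_odeg : ∑ v ∈ V, odeg E v = E.card := by
      rw [sum_odeg]
      congr 1
      exact filter_true_of_mem htails
    have hcard_blk : E.card = ∑ i ∈ Icc 1 m, ∑ j ∈ Icc 1 n, a i j := by
      rw [card_eq_sum_filter_row (fun e he => (hV _ (htails e he)).1)]
      refine sum_congr rfl (fun i hi => ?_)
      rw [filter_row_eq_sum_blk hheadIcc]
      exact sum_congr rfl (fun j hj => hb i hi j hj)
    have hsum_f : ∑ v ∈ V, f v = E.card := by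
      rw [← Finset.sum_fiberwise_of_maps_to (g := f) (t := Icc 1 m)
        (fun v hv => (hV v hv).1) f, hcard_blk]
      refine sum_congr rfl (fun i hi => ?_)
      rw [h1 i hi]
      have : ∑ v ∈ V.filter (fun v => f v = i), f v
          = ∑ _v ∈ V.filter (fun v => f v = i), i :=
        sum_congr rfl (fun u hu => (mem_filter.1 hu).2)
      rw [this, sum_const, smul_eq_mul, mul_comm]
    -- find a vertex with too-large out-degree
    have hex : ∃ v ∈ V, f v < odeg E v := by
      by_contra hno
      push_neg at hno
      have hlt : ∑ v ∈ V, odeg E v < ∑ v ∈ V, f v :=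
        Finset.sum_lt_sum hno ⟨v₀, hv₀, lt_of_le_of_ne (hno v₀ hv₀) hv₀ne⟩
      omega
    obtain ⟨v, hvV, hvlt⟩ := hex
    have hiI : f v ∈ Icc 1 m := (hV v hvV).1
    have hrow : ∑ u ∈ V.filter (fun u => f u = f v), odeg E u
        = f v * (V.filter (fun u => f u = f v)).card := by
      rw [sum_odeg]
      have heq : E.filter (fun e => e.1 ∈ V.filter (fun u => f u = f v))
          = E.filter (fun e => f e.1 = f v) := by
        refine filter_congr (fun e he => ?_)
        simp only [mem_filter, eq_iff_iff]
        exact ⟨fun h => h.2, fun h => ⟨htails e he, h⟩⟩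
      rw [heq, filter_row_eq_sum_blk hheadIcc, ← h1 _ hiI]
      exact sum_congr rfl (fun j hj => hb _ hiI j hj)
    have hex' : ∃ u ∈ V.filter (fun u => f u = f v), odeg E u < f v := by
      by_contra hno
      push_neg at hno
      have hvS : v ∈ V.filter (fun u => f u = f v) := mem_filter.2 ⟨hvV, rfl⟩
      have hlt : ∑ u ∈ V.filter (fun u => f u = f v), (fun _ => f v) u
          < ∑ u ∈ V.filter (fun u => f u = f v), odeg E u :=
        Finset.sum_lt_sum (fun u hu => hno u hu) ⟨v, hvS, hvlt⟩
      rw [sum_const, smul_eq_mul, mul_comm] at hlt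
      rw [hrow] at hlt
      exact absurd hlt (lt_irrefl _)
    obtain ⟨v', hv'S, hv'lt0⟩ := hex'
    have hv'V : v' ∈ V := (mem_filter.1 hv'S).1
    have hfv' : f v' = f v := (mem_filter.1 hv'S).2
    have hv'lt : odeg E v' < f v := hv'lt0
    have hvne : v' ≠ v := by
      intro h; rw [h] at hv'lt; omega
    -- find a swap target
    have hexw : ∃ w, (v, w) ∈ E ∧ w ≠ v' ∧ (v', w) ∉ E := by
      by_contra hno
      push_neg at hno
      have hinj : ((E.filter (fun e => e.1 = v)).filter (fun e => e.2 ≠ v')).card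
          ≤ odeg E v' := by
        refine card_le_card_of_injOn (fun e => (v', e.2)) ?_ ?_
        · intro e he
          obtain ⟨heN, hne2⟩ := mem_filter.1 he
          obtain ⟨heE, he1⟩ := mem_filter.1 heN
          have hvw : (v, e.2) ∈ E := by
            have : (e.1, e.2) = e := rfl
            rwa [← he1, this]
          exact mem_filter.2 ⟨hno e.2 hvw hne2, rfl⟩
        · intro e he e' he' h
          have h2 : e.2 = e'.2 := by simpa using congrArg Prod.snd h
          have h1e : e.1 = v := (mem_filter.1 (mem_filter.1 he).1).2
          have h1e' : e'.1 = v := (mem_filter.1 (mem_filter.1 he').1).2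
          exact Prod.ext (h1e.trans h1e'.symm) h2
      have hneg : ((E.filter (fun e => e.1 = v)).filter (fun e => ¬ e.2 ≠ v')).card ≤ 1 := by
        refine card_le_one.2 (fun e he e' he' => ?_)
        obtain ⟨heN, hne2⟩ := mem_filter.1 he
        obtain ⟨heN', hne2'⟩ := mem_filter.1 he'
        have : e.2 = v' := not_ne_iff.1 hne2
        have h' : e'.2 = v' := not_ne_iff.1 hne2'
        exact Prod.ext (((mem_filter.1 heN).2).trans ((mem_filter.1 heN').2).symm)
          (this.trans h'.symm)
      have hsplit := card_filter_add_card_filter_not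
        (s := E.filter (fun e => e.1 = v)) (p := fun e => e.2 ≠ v')
      have : odeg E v = (E.filter (fun e => e.1 = v)).card := rfl
      omega
    obtain ⟨w, hvw, hwv', hv'w⟩ := hexw
    have hwV : w ∈ V := (hE _ hvw).1.2
    have hE₂wf : ∀ e ∈ insert (v', w) (E.erase (v, w)),
        (e.1 ∈ V ∧ e.2 ∈ V) ∧ e.1 ≠ e.2 := by
      intro e he
      rcases mem_insert.1 he with h | h
      · subst h; exact ⟨⟨hv'V, hwV⟩, fun hh => hwv' hh.symm⟩
      · exact hE e (mem_of_mem_erase h)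
    have hE₂blk : ∀ i' ∈ Icc 1 m, ∀ j' ∈ Icc 1 n,
        blk f g (insert (v', w) (E.erase (v, w))) i' j' = a i' j' := by
      intro i' hi' j' hj'
      rw [blk, card_filter_insert_erase _ hv'w hvw (by simp [hfv'])]
      exact hb i' hi' j' hj'
    have hdv : odeg (insert (v', w) (E.erase (v, w))) v = odeg E v - 1 :=
      odeg_edit_self hvw hv'w hvne
    have hdv' : odeg (insert (v', w) (E.erase (v, w))) v' = odeg E v' + 1 :=
      odeg_edit_other hvw hv'w hvne
    have hideg : ∀ u, ideg (insert (v', w) (E.erase (v, w))) u = ideg E u := by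
      intro u; unfold ideg
      exact card_filter_insert_erase _ hv'w hvw Iff.rfl
    have hdelta : ∑ u ∈ V, ((odeg (insert (v', w) (E.erase (v, w))) u - f u)
        + (f u - odeg (insert (v', w) (E.erase (v, w))) u)) ≤ k := by
      have hsub : v' ∈ V.erase v := mem_erase.2 ⟨hvne, hv'V⟩
      have hrest : ∀ (E₃ : Finset (ℕ × ℕ)),
          ∑ u ∈ V, ((odeg E₃ u - f u) + (f u - odeg E₃ u))
          = ((odeg E₃ v - f v) + (f v - odeg E₃ v))
            + (((odeg E₃ v' - f v') + (f v' - odeg E₃ v'))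
              + ∑ u ∈ (V.erase v).erase v', ((odeg E₃ u - f u) + (f u - odeg E₃ u))) := by
        intro E₃
        rw [← Finset.add_sum_erase _ _ hvV, ← Finset.add_sum_erase _ _ hsub]
      rw [hrest] at hk ⊢
      have hsame : ∑ u ∈ (V.erase v).erase v',
          ((odeg (insert (v', w) (E.erase (v, w))) u - f u)
            + (f u - odeg (insert (v', w) (E.erase (v, w))) u))
          = ∑ u ∈ (V.erase v).erase v', ((odeg E u - f u) + (f u - odeg E u)) := by
        refine sum_congr rfl (fun u hu => ?_)
        have hu1 : u ≠ v' := (mem_erase.1 hu).1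
        have hu2 : u ≠ v := (mem_erase.1 (mem_erase.1 hu).2).1
        rw [odeg_edit_ne hvw hu2 hu1]
      rw [hsame, hdv, hdv', hfv']
      omega
    obtain ⟨E', h1', h2', h3', h4'⟩ := ih (insert (v', w) (E.erase (v, w))) hE₂wf hE₂blk hdelta
    exact ⟨E', h1', h2', fun u => (h3' u).trans (hideg u), h4'⟩

lemma fixBoth (V : Finset ℕ) (f g : ℕ → ℕ) (m n : ℕ) (a : ℕ → ℕ → ℕ)
    (hV : ∀ v ∈ V, f v ∈ Icc 1 m ∧ g v ∈ Icc 1 n)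
    (h1 : ∀ i ∈ Icc 1 m, ∑ j ∈ Icc 1 n, a i j = i * (V.filter (fun v => f v = i)).card)
    (h2 : ∀ j ∈ Icc 1 n, ∑ i ∈ Icc 1 m, a i j = j * (V.filter (fun v => g v = j)).card)
    (E₀ : Finset (ℕ × ℕ))
    (hE₀ : ∀ e ∈ E₀, (e.1 ∈ V ∧ e.2 ∈ V) ∧ e.1 ≠ e.2)
    (hb₀ : ∀ i ∈ Icc 1 m, ∀ j ∈ Icc 1 n, blk f g E₀ i j = a i j) :
    ∃ E, (∀ e ∈ E, (e.1 ∈ V ∧ e.2 ∈ V) ∧ e.1 ≠ e.2) ∧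
      (∀ i ∈ Icc 1 m, ∀ j ∈ Icc 1 n, blk f g E i j = a i j) ∧
      (∀ v ∈ V, odeg E v = f v) ∧ (∀ v ∈ V, ideg E v = g v) := by
  obtain ⟨E₁, hw1, hb1, _, ho1⟩ := fixOut V f g m n a hV h1
    (∑ v ∈ V, ((odeg E₀ v - f v) + (f v - odeg E₀ v))) E₀ hE₀ hb₀ le_rfl
  obtain ⟨F₂, hw2, hb2, hi2, ho2⟩ := fixOut V g f n m (fun j i => a i j)
    (fun v hv => ⟨(hV v hv).2, (hV v hv).1⟩) h2
    (∑ v ∈ V, ((odeg (E₁.image Prod.swap) v - g v) + (g v - odeg (E₁.image Prod.swap) v)))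
    (E₁.image Prod.swap) (wf_swap hw1)
    (fun j hj i hi => by rw [blk_swap]; exact hb1 i hi j hj) le_rfl
  refine ⟨F₂.image Prod.swap, wf_swap hw2, ?_, ?_, ?_⟩
  · intro i hi j hj
    rw [blk_swap]
    exact hb2 j hj i hi
  · intro v hv
    rw [odeg_swap, hi2 v, ideg_swap]
    exact ho1 v hv
  · intro v hv
    rw [ideg_swap]
    exact ho2 v hv

lemma initial (V : Finset ℕ) (f g : ℕ → ℕ) (m n : ℕ) (a : ℕ → ℕ → ℕ)
    (hcap : ∀ i ∈ Icc 1 m, ∀ j ∈ Icc 1 n,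
      a i j + (V.filter (fun v => f v = i ∧ g v = j)).card
        ≤ (V.filter (fun v => f v = i)).card * (V.filter (fun v => g v = j)).card) :
    ∃ E₀ : Finset (ℕ × ℕ), (∀ e ∈ E₀, (e.1 ∈ V ∧ e.2 ∈ V) ∧ e.1 ≠ e.2) ∧
      ∀ i ∈ Icc 1 m, ∀ j ∈ Icc 1 n, blk f g E₀ i j = a i j := by
  classical
  have hav : ∀ p ∈ Icc 1 m ×ˢ Icc 1 n, a p.1 p.2 ≤
      ((((V.filter (fun v => f v = p.1)) ×ˢ (V.filter (fun v => g v = p.2))).filter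
        (fun e => e.1 ≠ e.2))).card := by
    intro p hp
    obtain ⟨hp1, hp2⟩ := mem_product.1 hp
    have hdiag : (((V.filter (fun v => f v = p.1)) ×ˢ (V.filter (fun v => g v = p.2))).filter
        (fun e => ¬ e.1 ≠ e.2)).card = (V.filter (fun v => f v = p.1 ∧ g v = p.2)).card := by
      have himg : ((V.filter (fun v => f v = p.1)) ×ˢ (V.filter (fun v => g v = p.2))).filter
          (fun e => ¬ e.1 ≠ e.2)
          = (V.filter (fun v => f v = p.1 ∧ g v = p.2)).image (fun v => (v, v)) := by
        ext e
        simp only [mem_filter, mem_product, mem_image, not_ne_iff]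
        constructor
        · rintro ⟨⟨⟨h1V, h1f⟩, ⟨h2V, h2g⟩⟩, heq⟩
          exact ⟨e.1, ⟨h1V, h1f, by rw [heq]; exact h2g⟩, Prod.ext rfl heq⟩
        · rintro ⟨u, ⟨huV, huf, hug⟩, rfl⟩
          exact ⟨⟨⟨huV, huf⟩, ⟨huV, hug⟩⟩, rfl⟩
      rw [himg, card_image_of_injective]
      intro x y h
      simpa using congrArg Prod.fst h
    have hsplit := card_filter_add_card_filter_not
      (s := (V.filter (fun v => f v = p.1)) ×ˢ (V.filter (fun v => g v = p.2)))
      (p := fun e => e.1 ≠ e.2)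
    have hst := card_product (V.filter (fun v => f v = p.1)) (V.filter (fun v => g v = p.2))
    have hc := hcap p.1 hp1 p.2 hp2
    omega
  have hch : ∀ p ∈ Icc 1 m ×ˢ Icc 1 n, ∃ Cp : Finset (ℕ × ℕ),
      Cp ⊆ (((V.filter (fun v => f v = p.1)) ×ˢ (V.filter (fun v => g v = p.2))).filter
        (fun e => e.1 ≠ e.2)) ∧ Cp.card = a p.1 p.2 :=
    fun p hp => exists_subset_card_eq (hav p hp)
  choose C hCsub hCcard using hch
  refine ⟨(Icc 1 m ×ˢ Icc 1 n).attach.biUnion (fun q => C q.1 q.2), ?_, ?_⟩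
  · intro e he
    obtain ⟨⟨p, hp⟩, _, hmem⟩ := mem_biUnion.1 he
    have hsub := hCsub p hp hmem
    obtain ⟨hprod, hne⟩ := mem_filter.1 hsub
    obtain ⟨hl, hr⟩ := mem_product.1 hprod
    exact ⟨⟨(mem_filter.1 hl).1, (mem_filter.1 hr).1⟩, hne⟩
  · intro i hi j hj
    have hij : (i, j) ∈ Icc 1 m ×ˢ Icc 1 n := mem_product.2 ⟨hi, hj⟩
    have hfe : ((Icc 1 m ×ˢ Icc 1 n).attach.biUnion (fun q => C q.1 q.2)).filter
        (fun e => f e.1 = i ∧ g e.2 = j) = C (i, j) hij := by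
      ext e
      simp only [mem_filter, mem_biUnion, mem_attach, true_and]
      constructor
      · rintro ⟨⟨⟨p, hp⟩, hmem⟩, hfi, hgj⟩
        have hsub := hCsub p hp hmem
        have h1 : f e.1 = p.1 := (mem_filter.1 (mem_product.1 (mem_filter.1 hsub).1).1).2
        have h2 : g e.2 = p.2 := (mem_filter.1 (mem_product.1 (mem_filter.1 hsub).1).2).2
        have hpe : p = (i, j) := Prod.ext (by rw [← h1, hfi]) (by rw [← h2, hgj])
        subst hpe
        exact hmem
      · intro hmem
        have hsub := hCsub (i, j) hij hmem
        refine ⟨⟨⟨(i, j), hij⟩, hmem⟩,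
          (mem_filter.1 (mem_product.1 (mem_filter.1 hsub).1).1).2,
          (mem_filter.1 (mem_product.1 (mem_filter.1 hsub).1).2).2⟩
    rw [blk, hfe]
    exact hCcard (i, j) hij

lemma sum_ideg (E : Finset (ℕ × ℕ)) (S : Finset ℕ) :
    ∑ v ∈ S, ideg E v = (E.filter (fun e => e.2 ∈ S)).card := by
  have h1 : ∑ v ∈ S, ideg E v = ∑ v ∈ S, odeg (E.image Prod.swap) v :=
    sum_congr rfl (fun v _ => (odeg_swap E v).symm)
  rw [h1, sum_odeg, filter_swap_image, card_image_of_injective _ Prod.swap_injective]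
  rfl

lemma filter_col_eq_sum_blk {E : Finset (ℕ × ℕ)} {f g : ℕ → ℕ} {m : ℕ} {j : ℕ}
    (hf : ∀ e ∈ E, f e.1 ∈ Icc 1 m) :
    (E.filter (fun e => g e.2 = j)).card = ∑ i ∈ Icc 1 m, blk f g E i j := by
  rw [card_eq_sum_card_fiberwise (f := fun e => f e.1) (t := Icc 1 m)
    (fun e he => hf e (mem_of_mem_filter e he))]
  refine sum_congr rfl (fun i _ => ?_)
  rw [blk, filter_filter]
  exact congrArg _ (filter_congr (fun e _ => by simp [and_comm]))

/-! ### Instantiation: building the vertex set from `B` -/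

def fl (v : ℕ) : ℕ := v.unpair.1
def gl (v : ℕ) : ℕ := v.unpair.2.unpair.1

def vertsOf (m n : ℕ) (B : ℕ → ℕ → ℕ) : Finset ℕ :=
  (Icc 1 m ×ˢ Icc 1 n).biUnion (fun p =>
    (range (B p.1 p.2)).image (fun k => Nat.pair p.1 (Nat.pair p.2 k)))

lemma vertsOf_labels {m n : ℕ} {B : ℕ → ℕ → ℕ} :
    ∀ v ∈ vertsOf m n B, fl v ∈ Icc 1 m ∧ gl v ∈ Icc 1 n := by
  intro v hv
  obtain ⟨p, hp, hmem⟩ := mem_biUnion.1 hv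
  obtain ⟨k, _, rfl⟩ := mem_image.1 hmem
  obtain ⟨hp1, hp2⟩ := mem_product.1 hp
  constructor
  · simpa [fl, Nat.unpair_pair] using hp1
  · simpa [gl, Nat.unpair_pair] using hp2

lemma vertsOf_class_card {m n : ℕ} {B : ℕ → ℕ → ℕ} {i j : ℕ}
    (hi : i ∈ Icc 1 m) (hj : j ∈ Icc 1 n) :
    ((vertsOf m n B).filter (fun v => fl v = i ∧ gl v = j)).card = B i j := by
  have heq : (vertsOf m n B).filter (fun v => fl v = i ∧ gl v = j)
      = (range (B i j)).image (fun k => Nat.pair i (Nat.pair j k)) := by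
    ext v
    simp only [mem_filter, mem_image, mem_range]
    constructor
    · rintro ⟨hv, hfi, hgj⟩
      obtain ⟨p, hp, hmem⟩ := mem_biUnion.1 hv
      obtain ⟨k, hk, rfl⟩ := mem_image.1 hmem
      have e1 : p.1 = i := by simpa [fl, Nat.unpair_pair] using hfi
      have e2 : p.2 = j := by simpa [gl, Nat.unpair_pair] using hgj
      exact ⟨k, by rw [← e1, ← e2]; exact mem_range.1 hk, by rw [← e1, ← e2]⟩
    · rintro ⟨k, hk, rfl⟩
      refine ⟨mem_biUnion.2 ⟨(i, j), mem_product.2 ⟨hi, hj⟩,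
        mem_image.2 ⟨k, mem_range.2 hk, rfl⟩⟩, ?_, ?_⟩
      · simp [fl, Nat.unpair_pair]
      · simp [gl, Nat.unpair_pair]
  rw [heq, card_image_of_injective, card_range]
  intro x y h
  simpa [Nat.unpair_pair] using congrArg (fun z => z.unpair.2.unpair.2) h

lemma vertsOf_row_card {m n : ℕ} {B : ℕ → ℕ → ℕ} {i : ℕ} (hi : i ∈ Icc 1 m) :
    ((vertsOf m n B).filter (fun v => fl v = i)).card = ∑ j ∈ Icc 1 n, B i j := by
  rw [card_eq_sum_card_fiberwise (f := gl) (t := Icc 1 n)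
    (fun v hv => (vertsOf_labels v (mem_of_mem_filter v hv)).2)]
  refine sum_congr rfl (fun j hj => ?_)
  rw [filter_filter]
  exact vertsOf_class_card hi hj

lemma vertsOf_col_card {m n : ℕ} {B : ℕ → ℕ → ℕ} {j : ℕ} (hj : j ∈ Icc 1 n) :
    ((vertsOf m n B).filter (fun v => gl v = j)).card = ∑ i ∈ Icc 1 m, B i j := by
  rw [card_eq_sum_card_fiberwise (f := fl) (t := Icc 1 m)
    (fun v hv => (vertsOf_labels v (mem_of_mem_filter v hv)).1)]
  refine sum_congr rfl (fun i hi => ?_)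
  rw [filter_filter]
  rw [show (vertsOf m n B).filter (fun v => gl v = j ∧ fl v = i)
      = (vertsOf m n B).filter (fun v => fl v = i ∧ gl v = j) from
    filter_congr (fun v _ => by simp [and_comm])]
  exact vertsOf_class_card hi hj

end D2K

open Finset D2K

/-- D2K realizability condition: given `m × n` matrices
`A B : ℕ → ℕ → ℕ` (indexed by `i ∈ {1,…,m}`, `j ∈ {1,…,n}`), there exists a
finite simple directed graph `G` whose joint degree matrix is `A` and whose
degree correlation matrix is `B` (every vertex having out-degree in `{1,…,m}`
and in-degree in `{1,…,n}`) if and only if for all `i ∈ {1,…,m}`,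
`j ∈ {1,…,n}`:
(1) `Σ_{j'} A i j' = i * Σ_{j'} B i j'`,
(2) `Σ_{i'} A i' j = j * Σ_{i'} B i' j`, and
(3) `A i j + B i j ≤ (Σ_{j'} B i j') * (Σ_{i'} B i' j)`. -/


theorem d2k_condition (m n : ℕ) (A B : ℕ → ℕ → ℕ) :
    (∃ G : FinDigraph,
      (∀ v ∈ G.verts, G.outDeg v ∈ Finset.Icc 1 m ∧ G.inDeg v ∈ Finset.Icc 1 n) ∧
      (∀ i ∈ Finset.Icc 1 m, ∀ j ∈ Finset.Icc 1 n,
        G.dcm i j = B i j ∧ G.jdm i j = A i j))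
    ↔
    (∀ i ∈ Finset.Icc 1 m, ∀ j ∈ Finset.Icc 1 n,
      (∑ j' ∈ Finset.Icc 1 n, A i j' = i * ∑ j' ∈ Finset.Icc 1 n, B i j') ∧
      (∑ i' ∈ Finset.Icc 1 m, A i' j = j * ∑ i' ∈ Finset.Icc 1 m, B i' j) ∧
      (A i j + B i j
        ≤ (∑ j' ∈ Finset.Icc 1 n, B i j') * (∑ i' ∈ Finset.Icc 1 m, B i' j))) := by
  constructor
  · rintro ⟨G, hdeg, hmat⟩ i hi j hj
    have wf : ∀ e ∈ G.edges, (e.1 ∈ G.verts ∧ e.2 ∈ G.verts) ∧ e.1 ≠ e.2 :=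
      fun e he => ⟨G.mem_verts e he, G.no_loops e he⟩
    have hheads : ∀ e ∈ G.edges, G.inDeg e.2 ∈ Icc 1 n :=
      fun e he => (hdeg _ (wf e he).1.2).2
    have htailsI : ∀ e ∈ G.edges, G.outDeg e.1 ∈ Icc 1 m :=
      fun e he => (hdeg _ (wf e he).1.1).1
    have rowcard : (G.verts.filter (fun v => G.outDeg v = i)).card
        = ∑ j' ∈ Icc 1 n, B i j' := by
      rw [card_eq_sum_card_fiberwise (f := G.inDeg) (t := Icc 1 n)
        (fun v hv => (hdeg v (mem_of_mem_filter v hv)).2)]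
      refine sum_congr rfl (fun j' hj' => ?_)
      rw [filter_filter]
      exact (hmat i hi j' hj').1
    have colcard : (G.verts.filter (fun v => G.inDeg v = j)).card
        = ∑ i' ∈ Icc 1 m, B i' j := by
      rw [card_eq_sum_card_fiberwise (f := G.outDeg) (t := Icc 1 m)
        (fun v hv => (hdeg v (mem_of_mem_filter v hv)).1)]
      refine sum_congr rfl (fun i' hi' => ?_)
      rw [filter_filter, show G.verts.filter (fun v => G.inDeg v = j ∧ G.outDeg v = i')
          = G.verts.filter (fun v => G.outDeg v = i' ∧ G.inDeg v = j) from
        filter_congr (fun v _ => by simp [and_comm])]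
      exact (hmat i' hi' j hj).1
    refine ⟨?_, ?_, ?_⟩
    · have e1 : ∑ j' ∈ Icc 1 n, A i j'
          = ∑ j' ∈ Icc 1 n, blk G.outDeg G.inDeg G.edges i j' :=
        sum_congr rfl (fun j' hj' => ((hmat i hi j' hj').2).symm)
      rw [e1, ← filter_row_eq_sum_blk hheads]
      have e2 : G.edges.filter (fun e => G.outDeg e.1 = i)
          = G.edges.filter (fun e => e.1 ∈ G.verts.filter (fun v => G.outDeg v = i)) := by
        refine filter_congr (fun e he => ?_)
        simp only [mem_filter, eq_iff_iff]
        exact ⟨fun h => ⟨(wf e he).1.1, h⟩, fun h => h.2⟩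
      rw [e2, ← sum_odeg]
      have e3 : ∑ v ∈ G.verts.filter (fun v => G.outDeg v = i), odeg G.edges v
          = ∑ _v ∈ G.verts.filter (fun v => G.outDeg v = i), i :=
        sum_congr rfl (fun v hv => (mem_filter.1 hv).2)
      rw [e3, sum_const, smul_eq_mul, rowcard, mul_comm]
    · have e1 : ∑ i' ∈ Icc 1 m, A i' j
          = ∑ i' ∈ Icc 1 m, blk G.outDeg G.inDeg G.edges i' j :=
        sum_congr rfl (fun i' hi' => ((hmat i' hi' j hj).2).symm)
      rw [e1, ← filter_col_eq_sum_blk htailsI]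
      have e2 : G.edges.filter (fun e => G.inDeg e.2 = j)
          = G.edges.filter (fun e => e.2 ∈ G.verts.filter (fun v => G.inDeg v = j)) := by
        refine filter_congr (fun e he => ?_)
        simp only [mem_filter, eq_iff_iff]
        exact ⟨fun h => ⟨(wf e he).1.2, h⟩, fun h => h.2⟩
      rw [e2, ← sum_ideg]
      have e3 : ∑ v ∈ G.verts.filter (fun v => G.inDeg v = j), ideg G.edges v
          = ∑ _v ∈ G.verts.filter (fun v => G.inDeg v = j), j :=
        sum_congr rfl (fun v hv => (mem_filter.1 hv).2)
      rw [e3, sum_const, smul_eq_mul, colcard, mul_comm]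
    · have hF2card : ((G.verts.filter (fun v => G.outDeg v = i ∧ G.inDeg v = j)).image
          (fun v => (v, v))).card = B i j := by
        rw [card_image_of_injective _ (fun x y h => by simpa using congrArg Prod.fst h)]
        exact (hmat i hi j hj).1
      have hdisj : Disjoint (G.edges.filter (fun e => G.outDeg e.1 = i ∧ G.inDeg e.2 = j))
          ((G.verts.filter (fun v => G.outDeg v = i ∧ G.inDeg v = j)).image
            (fun v => (v, v))) := by
        rw [disjoint_left]
        intro e he1 he2
        obtain ⟨v, _, rfl⟩ := mem_image.1 he2
        exact G.no_loops _ (mem_of_mem_filter _ he1) rfl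
      have hsub : (G.edges.filter (fun e => G.outDeg e.1 = i ∧ G.inDeg e.2 = j))
          ∪ ((G.verts.filter (fun v => G.outDeg v = i ∧ G.inDeg v = j)).image
            (fun v => (v, v)))
          ⊆ (G.verts.filter (fun v => G.outDeg v = i))
            ×ˢ (G.verts.filter (fun v => G.inDeg v = j)) := by
        intro e he
        rcases mem_union.1 he with h | h
        · obtain ⟨heE, h1, h2⟩ := mem_filter.1 h
          exact mem_product.2 ⟨mem_filter.2 ⟨(wf e heE).1.1, h1⟩,
            mem_filter.2 ⟨(wf e heE).1.2, h2⟩⟩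
        · obtain ⟨v, hv, rfl⟩ := mem_image.1 h
          obtain ⟨hvV, h1, h2⟩ := mem_filter.1 hv
          exact mem_product.2 ⟨mem_filter.2 ⟨hvV, h1⟩, mem_filter.2 ⟨hvV, h2⟩⟩
      have := card_le_card hsub
      rw [card_union_of_disjoint hdisj, card_product, rowcard, colcard, hF2card] at this
      have hA : G.jdm i j = A i j := (hmat i hi j hj).2
      rw [← hA]
      exact this
  · intro h
    have hV := vertsOf_labels (m := m) (n := n) (B := B)
    have h1 : ∀ i ∈ Icc 1 m, ∑ j ∈ Icc 1 n, A i j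
        = i * ((vertsOf m n B).filter (fun v => fl v = i)).card := by
      intro i hi
      by_cases hn : 1 ≤ n
      · rw [vertsOf_row_card hi]
        exact (h i hi n (mem_Icc.2 ⟨hn, le_rfl⟩)).1
      · have hn0 : n = 0 := by omega
        subst hn0
        have hI : (Icc 1 0 : Finset ℕ) = ∅ := Icc_eq_empty (by omega)
        simp [vertsOf, hI]
    have h2 : ∀ j ∈ Icc 1 n, ∑ i ∈ Icc 1 m, A i j
        = j * ((vertsOf m n B).filter (fun v => gl v = j)).card := by
      intro j hj
      by_cases hm : 1 ≤ m
      · rw [vertsOf_col_card hj]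
        exact (h m (mem_Icc.2 ⟨hm, le_rfl⟩) j hj).2.1
      · have hm0 : m = 0 := by omega
        subst hm0
        have hI : (Icc 1 0 : Finset ℕ) = ∅ := Icc_eq_empty (by omega)
        simp [vertsOf, hI]
    have hcap : ∀ i ∈ Icc 1 m, ∀ j ∈ Icc 1 n,
        A i j + ((vertsOf m n B).filter (fun v => fl v = i ∧ gl v = j)).card
          ≤ ((vertsOf m n B).filter (fun v => fl v = i)).card
            * ((vertsOf m n B).filter (fun v => gl v = j)).card := by
      intro i hi j hj
      rw [vertsOf_class_card hi hj, vertsOf_row_card hi, vertsOf_col_card hj]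
      exact (h i hi j hj).2.2
    obtain ⟨E₀, hw0, hb0⟩ := initial (vertsOf m n B) fl gl m n A hcap
    obtain ⟨E, hw, hbE, hoE, hiE⟩ := fixBoth (vertsOf m n B) fl gl m n A hV h1 h2 E₀ hw0 hb0
    refine ⟨⟨vertsOf m n B, E, fun e he => (hw e he).1, fun e he => (hw e he).2⟩, ?_, ?_⟩
    · intro v hv
      constructor
      · show odeg E v ∈ Icc 1 m
        rw [hoE v hv]
        exact (hV v hv).1
      · show ideg E v ∈ Icc 1 n
        rw [hiE v hv]
        exact (hV v hv).2
    · intro i hi j hj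
      constructor
      · show ((vertsOf m n B).filter (fun v => odeg E v = i ∧ ideg E v = j)).card = B i j
        rw [show (vertsOf m n B).filter (fun v => odeg E v = i ∧ ideg E v = j)
            = (vertsOf m n B).filter (fun v => fl v = i ∧ gl v = j) from
          filter_congr (fun v hv => by rw [hoE v hv, hiE v hv])]
        exact vertsOf_class_card hi hj
      · show (E.filter (fun e => odeg E e.1 = i ∧ ideg E e.2 = j)).card = A i j
        rw [show E.filter (fun e => odeg E e.1 = i ∧ ideg E e.2 = j)
            = E.filter (fun e => fl e.1 = i ∧ gl e.2 = j) from
          filter_congr (fun e he => by rw [hoE _ (hw e he).1.1, hiE _ (hw e he).1.2])]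
        exact hbE i hi j hj
end

section
/- For every finite simple directed graph G (no self-loops) and all nonnegative integers i, j, the joint degree matrix entry and degree correlation matrix entry satisfy a_{ij} + b_{ij} ≤ |V_{i,out}|·|V_{j,in}|. -/
/-- for every finite simple directed graph and all `i j : ℕ`,
`a i j + b i j ≤ |V_{i,out}| * |V_{j,in}|`. -/
theorem jdm_add_dcm_le (G : FinDigraph) (i j : ℕ) :
    G.jdm i j + G.dcm i j
      ≤ (G.verts.filter (fun v => G.outDeg v = i)).card *
        (G.verts.filter (fun v => G.inDeg v = j)).card := by
  classical
  set A := G.verts.filter (fun v => G.outDeg v = i) with hA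
  set B := G.verts.filter (fun v => G.inDeg v = j) with hB
  set S := G.edges.filter (fun e => G.outDeg e.1 = i ∧ G.inDeg e.2 = j) with hS
  set D := (G.verts.filter (fun v => G.outDeg v = i ∧ G.inDeg v = j)).image
      (fun v => (v, v)) with hD
  have hDcard : D.card = G.dcm i j :=
    Finset.card_image_of_injective _ (fun a b h => by simpa using h)
  have hdisj : Disjoint S D := by
    rw [Finset.disjoint_left]
    intro e heS heD
    obtain ⟨v, _, rfl⟩ := Finset.mem_image.mp heD
    exact G.no_loops _ (Finset.mem_filter.mp heS).1 rfl
  have hsub : S ∪ D ⊆ A ×ˢ B := by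
    intro e he
    rcases Finset.mem_union.mp he with h | h
    · obtain ⟨he, h1, h2⟩ := Finset.mem_filter.mp h
      obtain ⟨hv1, hv2⟩ := G.mem_verts e he
      exact Finset.mem_product.mpr ⟨Finset.mem_filter.mpr ⟨hv1, h1⟩,
        Finset.mem_filter.mpr ⟨hv2, h2⟩⟩
    · obtain ⟨v, hv, rfl⟩ := Finset.mem_image.mp h
      obtain ⟨hvv, h1, h2⟩ := Finset.mem_filter.mp hv
      exact Finset.mem_product.mpr ⟨Finset.mem_filter.mpr ⟨hvv, h1⟩,
        Finset.mem_filter.mpr ⟨hvv, h2⟩⟩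
  calc G.jdm i j + G.dcm i j = (S ∪ D).card := by
        rw [Finset.card_union_of_disjoint hdisj, hDcard]; rfl
    _ ≤ (A ×ˢ B).card := Finset.card_le_card hsub
    _ = A.card * B.card := Finset.card_product A B
end

section
/- (Sparsity-refined floor-plus-adjustment deviation bound, inequality (25)) Let x_{ij} ≥ 0 be real numbers indexed by i = 1,…,m and j = 1,…,n, set z_{ij} = ⌊x_{ij}⌋, let K be the number of pairs (i,j) with x_{ij} > 0, and let d_{ij} be integers with 0 ≤ d_{ij} ≤ p for a fixed integer p ≥ 0, such that d_{ij} = 0 whenever x_{ij} = 0. Fix indices (i₀,j₀) with x_{i₀j₀} > 0, and suppose K ≥ 2, Σ_{i,j} z_{ij} + Σ_{i,j} d_{ij} > 0, Σ_{i,j} x_{ij} + Kp − p − 1 > 0, Σ_{i,j} x_{ij} − x_{i₀j₀} > 0, and Σ_{i,j} x_{ij} + p − K + 1 > 0. Then (x_{i₀j₀} − 1) / (Σ_{i,j} x_{ij} + Kp − p − 1) < (z_{i₀j₀} + d_{i₀j₀}) / (Σ_{i,j} z_{ij} + Σ_{i,j} d_{ij}) < (x_{i₀j₀} + p) / (Σ_{i,j}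 x_{ij} + p − K + 1). (The deviation occurs only at nonzero entries, since ⌊0⌋ = 0 and d vanishes there, so the term mn in the unrefined bound can be replaced by K.) -/
set_option maxHeartbeats 800000 in
/-- sparsity-refined floor-plus-adjustment deviation bound,
inequality (25): for nonnegative reals `x i j` (indexed by `Fin m × Fin n`),
`z i j = ⌊x i j⌋`, `K` the number of pairs `(i,j)` with `x i j > 0`, and
integers `d i j` with `0 ≤ d i j ≤ p` (for a fixed integer `p ≥ 0`) vanishing
wherever `x` vanishes, if `x i₀ j₀ > 0`, `K ≥ 2`, `Σ z + Σ d > 0`,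
`Σ x + K p − p − 1 > 0`, `Σ x − x i₀ j₀ > 0` and `Σ x + p − K + 1 > 0`, then
`(x i₀ j₀ − 1) / (Σ x + K p − p − 1)
  < (z i₀ j₀ + d i₀ j₀) / (Σ z + Σ d) < (x i₀ j₀ + p) / (Σ x + p − K + 1)`. -/
theorem sparse_floor_adjustment_deviation_bound (m n : ℕ)
    (x : Fin m → Fin n → ℝ) (hx : ∀ i j, 0 ≤ x i j)
    (K : ℕ)
    (hK : K = (Finset.univ.filter
      (fun q : Fin m × Fin n => 0 < x q.1 q.2)).card)
    (d : Fin m → Fin n → ℤ) (p : ℤ) (hp : 0 ≤ p)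
    (hd : ∀ i j, 0 ≤ d i j ∧ d i j ≤ p)
    (hd0 : ∀ i j, x i j = 0 → d i j = 0)
    (i₀ : Fin m) (j₀ : Fin n) (hpos : 0 < x i₀ j₀)
    (hK2 : 2 ≤ K)
    (hzd : 0 < (∑ i, ∑ j, (⌊x i j⌋ : ℤ)) + ∑ i, ∑ j, d i j)
    (h1 : 0 < (∑ i, ∑ j, x i j) + (K : ℝ) * p - p - 1)
    (hrest : 0 < (∑ i, ∑ j, x i j) - x i₀ j₀)
    (h3 : 0 < (∑ i, ∑ j, x i j) + p - (K : ℝ) + 1) :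
    (x i₀ j₀ - 1) / ((∑ i, ∑ j, x i j) + (K : ℝ) * p - p - 1)
        < ((⌊x i₀ j₀⌋ : ℝ) + (d i₀ j₀ : ℝ))
            / ((∑ i, ∑ j, (⌊x i j⌋ : ℝ)) + ∑ i, ∑ j, (d i j : ℝ)) ∧
    ((⌊x i₀ j₀⌋ : ℝ) + (d i₀ j₀ : ℝ))
            / ((∑ i, ∑ j, (⌊x i j⌋ : ℝ)) + ∑ i, ∑ j, (d i j : ℝ))
        < (x i₀ j₀ + p) / ((∑ i, ∑ j, x i j) + p - (K : ℝ) + 1) := by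
  classical
  set F := Finset.univ.filter (fun q : Fin m × Fin n => 0 < x q.1 q.2) with hF
  have hq₀ : (i₀, j₀) ∈ F := by simp [hF, hpos]
  have hxzero : ∀ q : Fin m × Fin n, q ∉ F → x q.1 q.2 = 0 := by
    intro q hq
    simp only [hF, Finset.mem_filter, Finset.mem_univ, true_and, not_lt] at hq
    exact le_antisymm hq (hx _ _)
  set g : Fin m × Fin n → ℝ := fun q => (⌊x q.1 q.2⌋ : ℝ) + (d q.1 q.2 : ℝ) with hg
  have hgzero : ∀ q ∉ F, g q = 0 := by
    intro q hq
    have h0 := hxzero q hq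
    simp [hg, h0, hd0 _ _ h0]
  have hT : ((∑ i, ∑ j, (⌊x i j⌋ : ℝ)) + ∑ i, ∑ j, (d i j : ℝ)) = ∑ q ∈ F, g q := by
    rw [← Fintype.sum_prod_type' (f := fun i j => ((⌊x i j⌋ : ℤ) : ℝ)),
        ← Fintype.sum_prod_type' (f := fun i j => ((d i j : ℤ) : ℝ)),
        ← Finset.sum_add_distrib]
    exact (Finset.sum_subset (Finset.subset_univ F) (fun q _ hq => hgzero q hq)).symm
  have hS : (∑ i, ∑ j, x i j) = ∑ q ∈ F, x q.1 q.2 := by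
    rw [← Fintype.sum_prod_type' (f := fun i j => x i j)]
    exact (Finset.sum_subset (Finset.subset_univ F) (fun q _ hq => hxzero q hq)).symm
  set T := ∑ q ∈ F, g q with hTdef
  set S := ∑ q ∈ F, x q.1 q.2 with hSdef
  have hTpos : 0 < T := by
    rw [← hT]
    exact_mod_cast hzd
  set E := F.erase (i₀, j₀) with hE
  have hEcard : (E.card : ℝ) = (K : ℝ) - 1 := by
    rw [hE, Finset.card_erase_of_mem hq₀, ← hK]
    have h1' : 1 ≤ K := le_trans (by norm_num) hK2
    push_cast [Nat.cast_sub h1']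
    ring
  have hEne : E.Nonempty := by
    rw [← Finset.card_pos, hE, Finset.card_erase_of_mem hq₀, ← hK]
    omega
  have hgle : ∀ q ∈ F, g q ≤ x q.1 q.2 + (p : ℝ) := by
    intro q _
    have h1' := Int.floor_le (x q.1 q.2)
    have h2' : ((d q.1 q.2 : ℤ) : ℝ) ≤ (p : ℝ) := by exact_mod_cast (hd q.1 q.2).2
    simp only [hg]; linarith
  have hggt : ∀ q ∈ F, x q.1 q.2 - 1 < g q := by
    intro q _
    have h1' := Int.sub_one_lt_floor (x q.1 q.2)
    have h2' : (0 : ℝ) ≤ ((d q.1 q.2 : ℤ) : ℝ) := by exact_mod_cast (hd q.1 q.2).1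
    simp only [hg]; linarith
  have hgnn : ∀ q ∈ F, 0 ≤ g q := by
    intro q _
    have a1 : (0:ℝ) ≤ (⌊x q.1 q.2⌋ : ℝ) := by
      exact_mod_cast Int.floor_nonneg.2 (hx q.1 q.2)
    have a2 : (0:ℝ) ≤ ((d q.1 q.2 : ℤ) : ℝ) := by exact_mod_cast (hd q.1 q.2).1
    simp only [hg]; linarith
  have hTsplit : ∑ q ∈ E, g q + g (i₀, j₀) = T := Finset.sum_erase_add F g hq₀
  have hSsplit : ∑ q ∈ E, x q.1 q.2 + x i₀ j₀ = S := Finset.sum_erase_add F _ hq₀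
  have hsum1 : ∑ q ∈ E, (x q.1 q.2 + (p:ℝ)) = (∑ q ∈ E, x q.1 q.2) + ((K:ℝ) - 1) * p := by
    rw [Finset.sum_add_distrib, Finset.sum_const, nsmul_eq_mul, hEcard]
  have hsum2 : ∑ q ∈ E, (x q.1 q.2 - (1:ℝ)) = (∑ q ∈ E, x q.1 q.2) - ((K:ℝ) - 1) := by
    rw [Finset.sum_sub_distrib, Finset.sum_const, nsmul_eq_mul, hEcard, mul_one]
  have hERle : ∑ q ∈ E, g q ≤ (S - x i₀ j₀) + ((K:ℝ) - 1) * p := by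
    have h := Finset.sum_le_sum (fun q hq => hgle q (Finset.mem_of_mem_erase hq))
      (s := E) (f := g) (g := fun q => x q.1 q.2 + (p:ℝ))
    rw [hsum1] at h
    linarith
  have hERgt : (S - x i₀ j₀) - ((K:ℝ) - 1) < ∑ q ∈ E, g q := by
    have h := Finset.sum_lt_sum_of_nonempty hEne
      (fun q hq => hggt q (Finset.mem_of_mem_erase hq))
      (f := fun q => x q.1 q.2 - (1:ℝ)) (g := g)
    rw [hsum2] at h
    linarith
  have hERnn : 0 ≤ ∑ q ∈ E, g q :=
    Finset.sum_nonneg (fun q hq => hgnn q (Finset.mem_of_mem_erase hq))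
  have hv0 : 0 ≤ g (i₀, j₀) := hgnn _ hq₀
  have hvgt : x i₀ j₀ - 1 < g (i₀, j₀) := hggt _ hq₀
  have hvle : g (i₀, j₀) ≤ x i₀ j₀ + p := hgle _ hq₀
  have hpR : (0:ℝ) ≤ (p:ℝ) := by exact_mod_cast hp
  have hK1R : (2:ℝ) ≤ (K:ℝ) := by exact_mod_cast hK2
  rw [hS] at h1 hrest h3 ⊢
  rw [hT]
  have hnum : ((⌊x i₀ j₀⌋ : ℝ) + (d i₀ j₀ : ℝ)) = g (i₀, j₀) := rfl
  rw [hnum]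
  -- abstract everything into real variables
  set v := g (i₀, j₀) with hvdef
  set R := ∑ q ∈ E, g q with hRdef
  set x₀ := x i₀ j₀ with hx₀def
  have hTR : R + v = T := hTsplit
  clear_value v R T S x₀
  clear hTsplit hTdef hSdef hvdef hRdef hx₀def hT hS hsum1 hsum2 hSsplit
  have hA : (0:ℝ) < S - x₀ + ((K:ℝ) - 1) * p := by
    have : (0:ℝ) ≤ ((K:ℝ) - 1) * p := mul_nonneg (by linarith) hpR
    linarith
  constructor
  · rw [div_lt_div_iff₀ h1 hTpos]
    rcases le_or_gt 0 (x₀ - 1) with hu | hu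
    · have f1 : (x₀ - 1) * T ≤ (x₀ - 1) * (v + (S - x₀ + ((K:ℝ) - 1) * p)) :=
        mul_le_mul_of_nonneg_left (by linarith) hu
      have f2 : 0 < (S - x₀ + ((K:ℝ) - 1) * p) * (v - (x₀ - 1)) :=
        mul_pos hA (by linarith)
      nlinarith [f1, f2]
    · have f1 : (x₀ - 1) * T < 0 := mul_neg_of_neg_of_pos hu hTpos
      have f2 : 0 ≤ v * (S + (K:ℝ) * p - (p:ℝ) - 1) := mul_nonneg hv0 h1.le
      linarith
  · rw [div_lt_div_iff₀ hTpos h3]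
    have hw : (0:ℝ) < x₀ + p := by linarith
    have hTv : v + ((S - x₀) - ((K:ℝ) - 1)) < T := by linarith
    rcases le_or_gt 0 ((S - x₀) - ((K:ℝ) - 1)) with hB | hB
    · have f1 : (x₀ + p) * (v + ((S - x₀) - ((K:ℝ) - 1))) < (x₀ + p) * T :=
        mul_lt_mul_of_pos_left hTv hw
      have f2 : v * ((S - x₀) - ((K:ℝ) - 1)) ≤ (x₀ + p) * ((S - x₀) - ((K:ℝ) - 1)) :=
        mul_le_mul_of_nonneg_right hvle hB
      nlinarith [f1, f2]
    · rcases eq_or_lt_of_le hv0 with hv | hv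
      · have f1 : 0 < (x₀ + p) * T := mul_pos hw hTpos
        nlinarith [f1]
      · have f1 : v * ((S - x₀) - ((K:ℝ) - 1)) < 0 :=
          mul_neg_of_pos_of_neg hv hB
        have f2 : v * (x₀ + p) ≤ (x₀ + p) * T := by
          have : v * (x₀ + p) ≤ T * (x₀ + p) :=
            mul_le_mul_of_nonneg_right (by linarith) hw.le
          linarith [this]
        nlinarith [f1, f2]
end
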